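/- Let X be a compact metric space with X^{slc} ≠ ∅ (i.e., X is semi-locally connected at some point). Then a transitive homeomorphism f : X → X satisfies property (CW) if and only if it is equicontinuous. -/

import Mathlib

open Metric Filter Topology Set

variable {X : Type*}

/-- The `n`-th iterate (for `n : ℤ`) of a homeomorphism `f : X ≃ₜ X`. -/
def hIter [TopologicalSpace X] (f : X ≃ₜ X) (n : ℤ) : X → X :=
  ⇑(f.toEquiv ^ n)

/-- `f` is equicontinuous: for every `ε > 0` there is `δ > 0` such that
`d(fⁿ x, fⁿ y) ≤ ε` for all `n : ℤ` whenever `d(x, y) ≤ δ`. -/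
def EquicontHomeo [MetricSpace X] (f : X ≃ₜ X) : Prop :=
  ∀ ε > (0 : ℝ), ∃ δ > (0 : ℝ), ∀ x y : X, dist x y ≤ δ →
    ∀ n : ℤ, dist (hIter f n x) (hIter f n y) ≤ ε

/-- Property (CW): `inf_{n ∈ ℤ} dist(fⁿ x, fⁿ C) > 0` for every `x ∈ X` and every
subcontinuum `C` (nonempty compact connected subset) with `x ∉ C`. -/
def PropCW [MetricSpace X] (f : X ≃ₜ X) : Prop :=
  ∀ (x : X) (C : Set X), C.Nonempty → IsCompact C → IsConnected C → x ∉ C →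
    0 < ⨅ n : ℤ, infDist (hIter f n x) (hIter f n '' C)

/-- `X` is semi-locally connected at `p`: every open neighborhood `U` of `p` contains an
open neighborhood `V` of `p` such that `X \ U` is covered by finitely many connected
components of `X \ V`. -/
def SemiLocallyConnectedAt [TopologicalSpace X] (p : X) : Prop :=
  ∀ U : Set X, IsOpen U → p ∈ U → ∃ V : Set X, IsOpen V ∧ p ∈ V ∧ V ⊆ U ∧
    ∃ 𝒞 : Finset (Set X), (∀ C ∈ 𝒞, ∃ x ∈ Vᶜ, C = connectedComponentIn Vᶜ x) ∧
      Uᶜ ⊆ ⋃ C ∈ 𝒞, C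

/-- `x` is an almost automorphic point of `f`. -/
def AlmostAutomorphicPt [MetricSpace X] (f : X ≃ₜ X) (x : X) : Prop :=
  ∀ (n : ℕ → ℤ) (y : X), Tendsto (fun i => hIter f (n i) x) atTop (𝓝 y) →
    Tendsto (fun i => hIter f (-(n i)) y) atTop (𝓝 x)

/-- A set `F ⊆ ℤ` is syndetic if it meets every interval `[n, n + l]` for some fixed `l > 0`. -/
def SyndeticZ (F : Set ℤ) : Prop :=
  ∃ l > (0 : ℤ), ∀ n : ℤ, ∃ m ∈ F, n ≤ m ∧ m ≤ n + l

/-- `x` is an almost periodic point of `f`. -/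
def AlmostPeriodicPt [TopologicalSpace X] (f : X ≃ₜ X) (x : X) : Prop :=
  ∀ U ∈ 𝓝 x, ∃ F : Set ℤ, SyndeticZ F ∧ ∀ n ∈ F, hIter f n x ∈ U

/-- `x` is a locally almost periodic point of `f`. -/
def LocallyAlmostPeriodicPt [TopologicalSpace X] (f : X ≃ₜ X) (x : X) : Prop :=
  ∀ U ∈ 𝓝 x, ∃ V ∈ 𝓝 x, V ⊆ U ∧ ∃ F : Set ℤ, SyndeticZ F ∧ ∀ n ∈ F, hIter f n '' V ⊆ U

/-- `f` is distal. -/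
def DistalHomeo [MetricSpace X] (f : X ≃ₜ X) : Prop :=
  ∀ x y : X, x ≠ y → 0 < ⨅ n : ℤ, dist (hIter f n x) (hIter f n y)

/-- `f` is transitive: some orbit `{fⁿ x : n ∈ ℤ}` is dense. -/
def TransitiveHomeo [TopologicalSpace X] (f : X ≃ₜ X) : Prop :=
  ∃ x : X, Dense (Set.range fun n : ℤ => hIter f n x)

section AuxiliaryLemmas

variable {X : Type*}

section IterBasics

variable [TopologicalSpace X] (f : X ≃ₜ X)

lemma hIter_add (a b : ℤ) (x : X) : hIter f (a + b) x = hIter f a (hIter f b x) := by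
  unfold hIter; rw [zpow_add]; rfl

lemma hIter_zero (x : X) : hIter f 0 x = x := by unfold hIter; simp

lemma hIter_cancel (n : ℤ) (x : X) : hIter f (-n) (hIter f n x) = x := by
  rw [← hIter_add, neg_add_cancel, hIter_zero]

private lemma contPowAux (g : X ≃ₜ X) (k : ℕ) : Continuous ⇑(g.toEquiv ^ k) := by
  induction k with
  | zero => simpa using continuous_id
  | succ m ih =>
    have h : ⇑(g.toEquiv ^ (m + 1)) = (fun x => (g.toEquiv ^ m) (g x)) := by
      funext x; rw [pow_succ]; rfl
    rw [h]; exact ih.comp g.continuous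

lemma continuous_hIter (n : ℤ) : Continuous (hIter f n) := by
  unfold hIter
  cases n with
  | ofNat k =>
      have h : (f.toEquiv ^ (Int.ofNat k)) = f.toEquiv ^ k := by simp [zpow_natCast]
      rw [h]; exact contPowAux f k
  | negSucc k =>
      have h1 : (f.toEquiv ^ (Int.negSucc k)) = (f.toEquiv ^ (k + 1))⁻¹ := zpow_negSucc _ _
      have h2 : (f.toEquiv ^ (k + 1))⁻¹ = (f.toEquiv⁻¹) ^ (k + 1) := (inv_pow _ _).symm
      have h3 : f.toEquiv⁻¹ = f.symm.toEquiv := rfl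
      rw [h1, h2, h3]
      exact contPowAux f.symm (k + 1)

end IterBasics

section EasyDirection

variable [MetricSpace X] (f : X ≃ₜ X)

lemma equicont_to_propCW (hE : EquicontHomeo f) : PropCW f := by
  intro x C hne hcomp _hconn hx
  have hC_closed : IsClosed C := hcomp.isClosed
  have hpos : 0 < infDist x C := (hC_closed.notMem_iff_infDist_pos hne).mp hx
  obtain ⟨δ, hδ, hP⟩ := hE (infDist x C / 2) (by linarith)
  have key : ∀ n : ℤ, δ ≤ infDist (hIter f n x) (hIter f n '' C) := by
    intro n
    rw [Metric.infDist_eq_iInf]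
    haveI : Nonempty (hIter f n '' C) := (hne.image _).to_subtype
    apply le_ciInf
    rintro ⟨y, c, hc, rfl⟩
    by_contra hlt
    push_neg at hlt
    have h1 := hP _ _ (le_of_lt hlt) (-n)
    rw [hIter_cancel, hIter_cancel] at h1
    have h2 : infDist x C ≤ dist x c := infDist_le_dist_of_mem hc
    linarith
  have h3 : δ ≤ ⨅ n : ℤ, infDist (hIter f n x) (hIter f n '' C) := le_ciInf key
  linarith

lemma distal_of_propCW (hCW : PropCW f) :
    ∀ u v : X, u ≠ v → 0 < ⨅ n : ℤ, dist (hIter f n u) (hIter f n v) := by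
  intro u v huv
  have h := hCW u {v} ⟨v, rfl⟩ isCompact_singleton isConnected_singleton (by simpa using huv)
  simpa [Set.image_singleton, Metric.infDist_singleton] using h

end EasyDirection

section Ellis

variable [MetricSpace X] [CompactSpace X] (f : X ≃ₜ X)

private lemma bdd_dist_orbit (u v : X) :
    BddBelow (Set.range fun n : ℤ => dist (hIter f n u) (hIter f n v)) := by
  refine ⟨0, ?_⟩; rintro _ ⟨k, rfl⟩; exact dist_nonneg

private lemma comp_iter_mem (n : ℤ) {h : X → X}
    (hh : h ∈ closure (Set.range fun m : ℤ => hIter f m)) :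
    (fun x => hIter f n (h x)) ∈ closure (Set.range fun m : ℤ => hIter f m) := by
  have hcont : Continuous (fun u : X → X => (fun x => hIter f n (u x))) :=
    continuous_pi fun x => (continuous_hIter f n).comp (continuous_apply x)
  have h2 := image_closure_subset_closure_image hcont (s := Set.range fun m : ℤ => hIter f m)
    ⟨h, hh, rfl⟩
  have h3 : (fun u : X → X => fun x => hIter f n (u x)) '' (Set.range fun m : ℤ => hIter f m)
      ⊆ Set.range fun m : ℤ => hIter f m := by
    rintro _ ⟨_, ⟨m, rfl⟩, rfl⟩
    refine ⟨n + m, by funext x; show hIter f (n+m) x = hIter f n (hIter f m x); rw [hIter_add]⟩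
  exact closure_mono h3 h2

private lemma comp_mem {g h : X → X}
    (hg : g ∈ closure (Set.range fun m : ℤ => hIter f m))
    (hh : h ∈ closure (Set.range fun m : ℤ => hIter f m)) :
    g ∘ h ∈ closure (Set.range fun m : ℤ => hIter f m) := by
  have hcont : Continuous (fun u : X → X => u ∘ h) :=
    continuous_pi fun x => continuous_apply (h x)
  have h2 := image_closure_subset_closure_image hcont (s := Set.range fun m : ℤ => hIter f m)
    ⟨g, hg, rfl⟩
  have h3 : (fun u : X → X => u ∘ h) '' (Set.range fun m : ℤ => hIter f m)
      ⊆ closure (Set.range fun m : ℤ => hIter f m) := by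
    rintro _ ⟨_, ⟨m, rfl⟩, rfl⟩
    exact comp_iter_mem f m hh
  have h4 := closure_mono h3 h2
  rwa [closure_closure] at h4

private lemma idem_id
    (hd : ∀ u v : X, u ≠ v → 0 < ⨅ n : ℤ, dist (hIter f n u) (hIter f n v))
    {u : X → X} (hu : u ∈ closure (Set.range fun m : ℤ => hIter f m))
    (huu : u ∘ u = u) (x : X) : u x = x := by
  by_contra hne
  have hc : 0 < ⨅ n : ℤ, dist (hIter f n x) (hIter f n (u x)) :=
    hd x (u x) (fun h => hne h.symm)
  set c := ⨅ n : ℤ, dist (hIter f n x) (hIter f n (u x)) with hcdef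
  have hopen : IsOpen {g : X → X | dist (g x) (u x) < c/3 ∧ dist (g (u x)) (u (u x)) < c/3} := by
    apply IsOpen.inter
    · exact isOpen_lt (((continuous_apply x).dist continuous_const)) continuous_const
    · exact isOpen_lt (((continuous_apply (u x)).dist continuous_const)) continuous_const
  have humem : u ∈ {g : X → X | dist (g x) (u x) < c/3 ∧ dist (g (u x)) (u (u x)) < c/3} := by
    constructor <;> simp [dist_self] <;> linarith
  obtain ⟨g, hgo, hgs⟩ := mem_closure_iff.mp hu _ hopen humem
  obtain ⟨n, rfl⟩ := hgs
  obtain ⟨hg1, hg2⟩ := hgo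
  have h3 : u (u x) = u x := congrFun huu x
  rw [h3] at hg2
  have h4 : dist (hIter f n x) (hIter f n (u x)) < 2*c/3 := by
    calc dist (hIter f n x) (hIter f n (u x))
        ≤ dist (hIter f n x) (u x) + dist (u x) (hIter f n (u x)) := dist_triangle _ _ _
      _ < c/3 + c/3 := by rw [dist_comm (u x)]; exact add_lt_add hg1 hg2
      _ = 2*c/3 := by ring
  have h5 : c ≤ dist (hIter f n x) (hIter f n (u x)) := ciInf_le (bdd_dist_orbit f x (u x)) n
  linarith

lemma dense_orbit_of_distal
    (hd : ∀ u v : X, u ≠ v → 0 < ⨅ n : ℤ, dist (hIter f n u) (hIter f n v))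
    (htrans : ∃ x : X, Dense (Set.range fun n : ℤ => hIter f n x)) :
    ∀ y : X, Dense (Set.range fun n : ℤ => hIter f n y) := by
  obtain ⟨x₀, hx₀⟩ := htrans
  intro y
  set A := closure (Set.range fun m : ℤ => hIter f m y) with hA
  set E := closure (Set.range fun m : ℤ => hIter f m) with hE
  have hAclosed : IsClosed A := isClosed_closure
  have hAinv : ∀ (n : ℤ) (z : X), z ∈ A → hIter f n z ∈ A := by
    intro n z hz
    have h2 := image_closure_subset_closure_image (continuous_hIter f n)
      (s := Set.range fun m : ℤ => hIter f m y) ⟨z, hz, rfl⟩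
    have h3 : (hIter f n) '' (Set.range fun m : ℤ => hIter f m y)
        ⊆ Set.range fun m : ℤ => hIter f m y := by
      rintro _ ⟨_, ⟨m, rfl⟩, rfl⟩
      refine ⟨n + m, ?_⟩
      show hIter f (n+m) y = hIter f n (hIter f m y)
      rw [hIter_add]
    exact closure_mono h3 h2
  have hEapp : ∀ g ∈ E, ∀ z ∈ A, g z ∈ A := by
    intro g hg z hz
    have hev : Continuous (fun u : X → X => u z) := continuous_apply z
    have h2 := image_closure_subset_closure_image hev
      (s := Set.range fun m : ℤ => hIter f m) ⟨g, hg, rfl⟩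
    have h3 : (fun u : X → X => u z) '' (Set.range fun m : ℤ => hIter f m) ⊆ A := by
      rintro _ ⟨_, ⟨m, rfl⟩, rfl⟩
      exact hAinv m z hz
    have h4 := closure_mono h3 h2
    rwa [hAclosed.closure_eq] at h4
  have hyA : y ∈ A := subset_closure ⟨0, hIter_zero f y⟩
  have hsurj : ∀ w : X, ∃ g ∈ E, g x₀ = w := by
    intro w
    have hScomp : IsCompact ((fun g : X → X => g x₀) '' E) :=
      (isClosed_closure.isCompact).image (continuous_apply x₀)
    have hSclosed : IsClosed ((fun g : X → X => g x₀) '' E) := hScomp.isClosed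
    have hsub : Set.range (fun n : ℤ => hIter f n x₀) ⊆ (fun g : X → X => g x₀) '' E := by
      rintro _ ⟨n, rfl⟩
      exact ⟨hIter f n, subset_closure ⟨n, rfl⟩, rfl⟩
    have huniv : (Set.univ : Set X) ⊆ (fun g : X → X => g x₀) '' E := by
      rw [← hx₀.closure_eq]
      calc closure (Set.range fun n : ℤ => hIter f n x₀)
          ⊆ closure ((fun g : X → X => g x₀) '' E) := closure_mono hsub
        _ = (fun g : X → X => g x₀) '' E := hSclosed.closure_eq
    obtain ⟨g, hgE, hg⟩ := huniv (Set.mem_univ w)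
    exact ⟨g, hgE, hg⟩
  set J : Set (X → X) := E ∩ ((fun g : X → X => g x₀) ⁻¹' A) with hJ
  have hJclosed : IsClosed J :=
    isClosed_closure.inter (hAclosed.preimage (continuous_apply x₀))
  have hJne : J.Nonempty := by
    obtain ⟨g, hgE, hg⟩ := hsurj y
    exact ⟨g, hgE, by simp [hg, hyA]⟩
  have hJmul : ∀ g ∈ J, ∀ h ∈ J, (g ∘ h) ∈ J := by
    intro g hg h hh
    exact ⟨comp_mem f hg.1 hh.1, hEapp g hg.1 (h x₀) hh.2⟩
  haveI : Nonempty J := hJne.to_subtype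
  letI : Mul J := ⟨fun a b => ⟨a.1 ∘ b.1, hJmul _ a.2 _ b.2⟩⟩
  letI : Semigroup J := { mul_assoc := fun a b c => Subtype.ext rfl }
  haveI : CompactSpace J := isCompact_iff_compactSpace.mp hJclosed.isCompact
  have hcml : ∀ r : J, Continuous (· * r) := by
    intro r
    apply Continuous.subtype_mk
    exact continuous_pi fun x => (continuous_apply (r.1 x)).comp continuous_subtype_val
  obtain ⟨m, hm⟩ := exists_idempotent_of_compact_t2_of_continuous_mul_left hcml
  have hmm : m.1 ∘ m.1 = m.1 := congrArg Subtype.val hm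
  have hid : m.1 x₀ = x₀ := idem_id f hd m.2.1 hmm x₀
  have hx₀A : x₀ ∈ A := by
    have h := m.2.2
    rwa [Set.mem_preimage, hid] at h
  have hsub2 : Set.range (fun n : ℤ => hIter f n x₀) ⊆ A := by
    rintro _ ⟨n, rfl⟩
    exact hAinv n x₀ hx₀A
  have huniv : (Set.univ : Set X) ⊆ A := by
    rw [← hx₀.closure_eq]
    calc closure (Set.range fun n : ℤ => hIter f n x₀) ⊆ closure A := closure_mono hsub2
      _ = A := hAclosed.closure_eq
  rw [dense_iff_closure_eq]
  exact Set.eq_univ_of_univ_subset huniv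

end Ellis

section Struct

variable [MetricSpace X] [CompactSpace X] (f : X ≃ₜ X)

lemma struct_lemma (hCW : PropCW f) (p : X) (hp : SemiLocallyConnectedAt p)
    {r : ℝ} (hr : 0 < r) :
    ∃ (x₀ : X) (δ β : ℝ), 0 < δ ∧ 0 < β ∧
      ∀ x ∈ ball x₀ δ, ∀ w : X, 2*r ≤ dist x w →
        ∀ m : ℤ, β ≤ dist (hIter f m x) (hIter f m w) := by
  obtain ⟨V, hVopen, hpV, hVU, 𝒞, h𝒞, hcover⟩ := hp (ball p r) isOpen_ball (mem_ball_self hr)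
  have hVc_closed : IsClosed (Vᶜ) := hVopen.isClosed_compl
  have hpos : ∀ x ∈ V, ∀ C ∈ 𝒞, 0 < ⨅ n : ℤ, infDist (hIter f n x) (hIter f n '' C) := by
    intro x hxV C hC
    obtain ⟨xc, hxc, rfl⟩ := h𝒞 C hC
    have hcomp : IsCompact (connectedComponentIn Vᶜ xc) := by
      rw [connectedComponentIn_eq_image hxc]
      haveI : CompactSpace (Vᶜ : Set X) := isCompact_iff_compactSpace.mp hVc_closed.isCompact
      exact (isClosed_connectedComponent.isCompact).image continuous_subtype_val
    exact hCW x _ ⟨xc, mem_connectedComponentIn hxc⟩ hcomp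
      (isConnected_connectedComponentIn_iff.mpr hxc)
      (fun hxin => (connectedComponentIn_subset _ _ hxin) hxV)
  set A : ℕ → Set X := fun m =>
    {x | ∀ C ∈ 𝒞, ∀ n : ℤ, 1/(m+1 : ℝ) ≤ infDist (hIter f n x) (hIter f n '' C)} with hA
  have hAclosed : ∀ m, IsClosed (A m) := by
    intro m
    have h : A m = ⋂ C ∈ 𝒞, ⋂ n : ℤ,
        (fun x => infDist (hIter f n x) (hIter f n '' C)) ⁻¹' Ici (1/(m+1 : ℝ)) := by
      ext x; simp [hA]
    rw [h]
    refine isClosed_biInter fun C _ => isClosed_iInter fun n => ?_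
    exact IsClosed.preimage ((continuous_infDist_pt _).comp (continuous_hIter f n)) isClosed_Ici
  have hcov2 : ∀ x ∈ V, ∃ m : ℕ, x ∈ A m := by
    intro x hxV
    have hex : ∀ C : Set X, ∃ mC : ℕ, C ∈ 𝒞 →
        ∀ n : ℤ, 1/(mC+1 : ℝ) ≤ infDist (hIter f n x) (hIter f n '' C) := by
      intro C
      by_cases hC : C ∈ 𝒞
      · obtain ⟨mC, hm⟩ := exists_nat_one_div_lt (hpos x hxV C hC)
        refine ⟨mC, fun _ n => ?_⟩
        have h1 : (1 : ℝ)/(mC+1) ≤ ⨅ n : ℤ, infDist (hIter f n x) (hIter f n '' C) :=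
          le_of_lt (by exact_mod_cast hm)
        have h2 : (⨅ n : ℤ, infDist (hIter f n x) (hIter f n '' C))
            ≤ infDist (hIter f n x) (hIter f n '' C) := by
          apply ciInf_le ⟨0, ?_⟩ n
          rintro _ ⟨k, rfl⟩; exact infDist_nonneg
        linarith
      · exact ⟨0, fun h => absurd h hC⟩
    choose mf hmf using hex
    refine ⟨𝒞.sup mf, fun C hC n => ?_⟩
    have h1 : (1 : ℝ)/(𝒞.sup mf + 1) ≤ 1/(mf C + 1) := by
      apply one_div_le_one_div_of_le
      · positivity
      · have h2 := Finset.le_sup (f := mf) hC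
        exact_mod_cast Nat.succ_le_succ h2
    exact le_trans h1 (hmf C hC n)
  obtain ⟨s₀, hs₀, hball⟩ := Metric.isOpen_iff.mp hVopen p hpV
  set s : ℝ := min (s₀/2) r with hs
  have hspos : 0 < s := lt_min (by linarith) hr
  have hsr : s ≤ r := min_le_right _ _
  set T : Set X := closure (ball p s) with hT
  have hTV : T ⊆ V := by
    calc T ⊆ closedBall p s := closure_ball_subset_closedBall
      _ ⊆ ball p s₀ := closedBall_subset_ball (lt_of_le_of_lt (min_le_left _ _) (by linarith))
      _ ⊆ V := hball
  have hTclosed : IsClosed T := isClosed_closure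
  have hpT : p ∈ T := subset_closure (mem_ball_self hspos)
  haveI : Nonempty T := ⟨⟨p, hpT⟩⟩
  haveI : CompleteSpace T := hTclosed.completeSpace_coe
  have hcovT : (⋃ m : ℕ, ((↑) ⁻¹' (A m) : Set T)) = Set.univ := by
    apply Set.eq_univ_iff_forall.mpr
    intro t
    obtain ⟨m, hm⟩ := hcov2 t.1 (hTV t.2)
    exact Set.mem_iUnion.mpr ⟨m, hm⟩
  obtain ⟨i, hi⟩ := nonempty_interior_of_iUnion_of_closed
    (fun m => (hAclosed m).preimage continuous_subtype_val) hcovT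
  obtain ⟨t₁, ht₁⟩ := hi
  obtain ⟨ε, hε, hballsub⟩ := Metric.isOpen_iff.mp isOpen_interior t₁ ht₁
  obtain ⟨x₁, hx₁T⟩ := t₁
  have hkey : ∀ y, y ∈ T → dist y x₁ < ε → y ∈ A i := by
    intro y hyT hy
    have hmem : (⟨y, hyT⟩ : T) ∈ Metric.ball (⟨x₁, hx₁T⟩ : T) ε := by
      rw [Metric.mem_ball, Subtype.dist_eq]
      exact hy
    have h := interior_subset (hballsub hmem)
    exact h
  obtain ⟨xs, hxs1, hxs2⟩ := (_root_.mem_closure_iff.mp hx₁T) (ball x₁ (ε/2)) isOpen_ball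
    (mem_ball_self (by linarith))
  set δ : ℝ := min (ε/2) (s - dist xs p) with hδ
  have hxsp : dist xs p < s := mem_ball.mp hxs2
  have hδpos : 0 < δ := lt_min (by linarith) (by linarith)
  refine ⟨xs, δ, 1/(i+1 : ℝ), hδpos, by positivity, ?_⟩
  intro x hx w hw m
  have hx1 : dist x p < s := by
    have h1 : dist x xs < δ := mem_ball.mp hx
    have h2 := min_le_right (ε/2) (s - dist xs p)
    calc dist x p ≤ dist x xs + dist xs p := dist_triangle _ _ _
      _ < δ + dist xs p := by linarith
      _ ≤ (s - dist xs p) + dist xs p := by linarith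
      _ = s := by ring
  have hxT : x ∈ T := subset_closure (mem_ball.mpr hx1)
  have hxA : x ∈ A i := by
    apply hkey x hxT
    have h1 : dist x xs < δ := mem_ball.mp hx
    have h2 : dist xs x₁ < ε/2 := mem_ball.mp hxs1
    have h3 : δ ≤ ε/2 := min_le_left _ _
    calc dist x x₁ ≤ dist x xs + dist xs x₁ := dist_triangle _ _ _
      _ < ε/2 + ε/2 := by linarith
      _ = ε := by ring
  have hwU : w ∉ ball p r := by
    intro hwB
    have h1 : dist x w ≤ dist x p + dist p w := dist_triangle _ _ _
    have h2 : dist p w < r := by rw [dist_comm]; exact mem_ball.mp hwB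
    have h3 : dist x p < r := lt_of_lt_of_le hx1 hsr
    linarith
  obtain ⟨C, hC𝒞, hwC⟩ := by
    have h := hcover hwU
    simpa using h
  calc (1 : ℝ)/(i+1) ≤ infDist (hIter f m x) (hIter f m '' C) := hxA C hC𝒞 m
    _ ≤ dist (hIter f m x) (hIter f m w) := infDist_le_dist_of_mem ⟨w, hwC, rfl⟩

lemma lag_lemma (B : Set X) (hB : IsOpen B) (hBne : B.Nonempty)
    (hmin : ∀ y : X, Dense (Set.range fun n : ℤ => hIter f n y)) :
    ∃ F : Finset ℤ, ∀ y : X, ∃ m ∈ F, hIter f m y ∈ B := by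
  have hcov : (Set.univ : Set X) ⊆ ⋃ m : ℤ, (hIter f m) ⁻¹' B := by
    intro y _
    obtain ⟨z, ⟨n, rfl⟩, hzB⟩ := (hmin y).exists_mem_open hB hBne
    exact Set.mem_iUnion.mpr ⟨n, hzB⟩
  obtain ⟨F, hF⟩ := isCompact_univ.elim_finite_subcover (fun m : ℤ => (hIter f m) ⁻¹' B)
    (fun m => hB.preimage (continuous_hIter f m)) hcov
  refine ⟨F, fun y => ?_⟩
  obtain ⟨m, hmF, hm⟩ := Set.mem_iUnion₂.mp (hF (Set.mem_univ y))
  exact ⟨m, hmF, hm⟩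

end Struct

section HardDirection

variable [MetricSpace X] [CompactSpace X] (f : X ≃ₜ X)

lemma propCW_to_equicont (hCW : PropCW f)
    (hslc : ∃ p : X, SemiLocallyConnectedAt p) (htrans : TransitiveHomeo f) :
    EquicontHomeo f := by
  obtain ⟨p, hp⟩ := hslc
  have hd := distal_of_propCW f hCW
  have hmin := dense_orbit_of_distal f hd htrans
  by_contra hNE
  unfold EquicontHomeo at hNE
  push_neg at hNE
  obtain ⟨ε, hε, hbad⟩ := hNE
  have hseq : ∀ i : ℕ, ∃ (x z : X) (n : ℤ), dist x z ≤ 1/(i+1 : ℝ) ∧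
      ε < dist (hIter f n x) (hIter f n z) := by
    intro i
    obtain ⟨x, z, hxz, n, hn⟩ := hbad (1/(i+1 : ℝ)) (by positivity)
    exact ⟨x, z, n, hxz, hn⟩
  choose xs zs ns hclose hfar using hseq
  obtain ⟨a, -, φ, hφ, ha⟩ := isCompact_univ.tendsto_subseq
    (x := fun i => hIter f (ns i) (xs i)) (fun i => Set.mem_univ _)
  obtain ⟨b, -, ψ, hψ, hb⟩ := isCompact_univ.tendsto_subseq
    (x := fun i => hIter f (ns (φ i)) (zs (φ i))) (fun i => Set.mem_univ _)
  set Φ : ℕ → ℕ := φ ∘ ψ with hΦ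
  have hΦmono : StrictMono Φ := hφ.comp hψ
  have haΦ : Tendsto (fun i => hIter f (ns (Φ i)) (xs (Φ i))) atTop (𝓝 a) :=
    ha.comp hψ.tendsto_atTop
  have hbΦ : Tendsto (fun i => hIter f (ns (Φ i)) (zs (Φ i))) atTop (𝓝 b) := hb
  have hdistab : ε ≤ dist a b := by
    have hcont : Tendsto (fun i => dist (hIter f (ns (Φ i)) (xs (Φ i)))
        (hIter f (ns (Φ i)) (zs (Φ i)))) atTop (𝓝 (dist a b)) := haΦ.dist hbΦ
    exact ge_of_tendsto' hcont (fun i => le_of_lt (hfar (Φ i)))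
  have hab : a ≠ b := by
    intro h
    rw [h, dist_self] at hdistab
    linarith
  have hcpos := hd a b hab
  set c := ⨅ n : ℤ, dist (hIter f n a) (hIter f n b) with hc
  obtain ⟨x₀, δ, β, hδ, hβ, hstruct⟩ := struct_lemma f hCW p hp (show (0:ℝ) < c/5 by linarith)
  obtain ⟨F, hF⟩ := lag_lemma f (ball x₀ δ) isOpen_ball ⟨x₀, mem_ball_self hδ⟩ hmin
  have hms : ∀ i : ℕ, ∃ m ∈ F, hIter f m (hIter f (ns (Φ i)) (xs (Φ i))) ∈ ball x₀ δ :=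
    fun i => hF _
  choose ms hmsF hmsB using hms
  obtain ⟨I₀, hI₀⟩ := exists_nat_gt (1/β)
  have hsmall : ∀ i : ℕ, I₀ ≤ i → dist (xs (Φ i)) (zs (Φ i)) < β := by
    intro i hi
    have h1 : dist (xs (Φ i)) (zs (Φ i)) ≤ 1/((Φ i : ℝ)+1) := hclose (Φ i)
    have h2 : (i : ℝ) ≤ (Φ i : ℝ) := by exact_mod_cast hΦmono.le_apply
    have h3 : (I₀ : ℝ) ≤ (i : ℝ) := by exact_mod_cast hi
    have h4 : 1/β < ((Φ i : ℝ) + 1) := by linarith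
    have h5 : 1/((Φ i : ℝ)+1) < β := (one_div_lt (by positivity) hβ).mpr h4
    linarith
  have hclaim : ∀ i : ℕ, I₀ ≤ i →
      dist (hIter f (ms i) (hIter f (ns (Φ i)) (xs (Φ i))))
        (hIter f (ms i) (hIter f (ns (Φ i)) (zs (Φ i)))) < 2*(c/5) := by
    intro i hi
    by_contra hcon
    push_neg at hcon
    have happ := hstruct _ (hmsB i) _ hcon (-(ms i + ns (Φ i)))
    have e1 : hIter f (-(ms i + ns (Φ i)))
        (hIter f (ms i) (hIter f (ns (Φ i)) (xs (Φ i)))) = xs (Φ i) := by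
      rw [← hIter_add f (ms i) (ns (Φ i)) (xs (Φ i))]
      exact hIter_cancel f _ _
    have e2 : hIter f (-(ms i + ns (Φ i)))
        (hIter f (ms i) (hIter f (ns (Φ i)) (zs (Φ i)))) = zs (Φ i) := by
      rw [← hIter_add f (ms i) (ns (Φ i)) (zs (Φ i))]
      exact hIter_cancel f _ _
    rw [e1, e2] at happ
    have := hsmall i hi
    linarith
  have hinf : ∃ t ∈ F, {i : ℕ | ms i = t}.Infinite := by
    by_contra hcon
    push_neg at hcon
    have hfin : (Set.univ : Set ℕ).Finite := by
      have hU : (Set.univ : Set ℕ) ⊆ ⋃ t ∈ (F : Set ℤ), {i | ms i = t} :=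
        fun i _ => Set.mem_iUnion₂.mpr ⟨ms i, hmsF i, rfl⟩
      exact (Set.Finite.biUnion F.finite_toSet
        (fun t ht => hcon t ht)).subset hU
    exact Set.infinite_univ hfin
  obtain ⟨t, htF, htInf⟩ := hinf
  have hlim : Tendsto (fun i => dist (hIter f t (hIter f (ns (Φ i)) (xs (Φ i))))
      (hIter f t (hIter f (ns (Φ i)) (zs (Φ i))))) atTop
      (𝓝 (dist (hIter f t a) (hIter f t b))) :=
    (((continuous_hIter f t).tendsto a).comp haΦ).dist
      (((continuous_hIter f t).tendsto b).comp hbΦ)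
  have hle : dist (hIter f t a) (hIter f t b) ≤ 2*(c/5) := by
    by_contra hgt
    push_neg at hgt
    have hev : ∀ᶠ i in atTop, 2*(c/5) < dist (hIter f t (hIter f (ns (Φ i)) (xs (Φ i))))
        (hIter f t (hIter f (ns (Φ i)) (zs (Φ i)))) := hlim.eventually (eventually_gt_nhds hgt)
    obtain ⟨N, hN⟩ := eventually_atTop.mp hev
    obtain ⟨i, hiS, hiN⟩ := htInf.exists_gt (max N I₀)
    have h1 := hclaim i (le_trans (le_max_right _ _) (le_of_lt hiN))
    have h2 := hN i (le_trans (le_max_left _ _) (le_of_lt hiN))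
    rw [hiS] at h1
    linarith
  have hfin : c ≤ dist (hIter f t a) (hIter f t b) := ciInf_le (bdd_dist_orbit f a b) t
  linarith

end HardDirection

end AuxiliaryLemmas

/-- If `X^{slc} ≠ ∅`, a transitive homeomorphism satisfies (CW) iff it is
equicontinuous. -/
theorem transitive_propCW_iff_equicont
    [MetricSpace X] [CompactSpace X] (f : X ≃ₜ X)
    (hslc : ∃ p : X, SemiLocallyConnectedAt p) (htrans : TransitiveHomeo f) :
    PropCW f ↔ EquicontHomeo f := by
  constructor
  · intro hCW
    exact propCW_to_equicont f hCW hslc htrans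
  · intro hE
    exact equicont_to_propCW f hE
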